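/- In the setting of the previous context, the second component satisfies a |(Σ_{s,t}(a)^{-1} w)₂| ≤ (1/sqrt((t−s) m_{s,t})) · sqrt( a ⟨Σ_{s,t}(a)^{-1} w, w⟩ ), for all w ∈ ℝ². -/

import Mathlib

open MeasureTheory intervalIntegral Matrix

/-- Bound on the second component of `Σ_{s,t}(a)⁻¹ w`. -/
theorem stmt11 (T a : ℝ) (ha : 0 < a) (A : ℝ → ℝ) (hA : ContinuousOn A (Set.Icc 0 T))
    (s t : ℝ) (hs : 0 ≤ s) (hst : s < t) (htT : t ≤ T)
    (hm : 0 < (t - s)⁻¹ * ∫ r in s..t, (A r - (t - s)⁻¹ * ∫ u in s..t, A u) ^ 2)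
    (w : Fin 2 → ℝ) :
    a * |((a • !![t - s, -(∫ r in s..t, (A r - A s));
                  -(∫ r in s..t, (A r - A s)), ∫ r in s..t, (A r - A s) ^ 2])⁻¹.mulVec w) 1|
      ≤ (1 / Real.sqrt ((t - s)
            * ((t - s)⁻¹ * ∫ r in s..t, (A r - (t - s)⁻¹ * ∫ u in s..t, A u) ^ 2)))
        * Real.sqrt (a *
            ((a • !![t - s, -(∫ r in s..t, (A r - A s));
                     -(∫ r in s..t, (A r - A s)),
                     ∫ r in s..t, (A r - A s) ^ 2])⁻¹.mulVec w ⬝ᵥ w)) := by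
  have hp : (0:ℝ) < t - s := by linarith
  -- integrability
  have hsub : Set.uIcc s t ⊆ Set.Icc 0 T := by
    rw [Set.uIcc_of_le hst.le]
    exact Set.Icc_subset_Icc hs htT
  have hAc : ContinuousOn A (Set.uIcc s t) := hA.mono hsub
  have hI : IntervalIntegrable A volume s t := hAc.intervalIntegrable
  have hI2 : IntervalIntegrable (fun r => (A r)^2) volume s t :=
    (hAc.pow 2).intervalIntegrable
  set I1 := ∫ r in s..t, A r with hI1def
  set I2 := ∫ r in s..t, (A r)^2 with hI2def
  set p := t - s with hpdef
  set m := p⁻¹ * ∫ r in s..t, (A r - p⁻¹ * ∫ u in s..t, A u) ^ 2 with hmdef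
  -- compute b
  have hb : (∫ r in s..t, (A r - A s)) = I1 - A s * p := by
    rw [intervalIntegral.integral_sub hI intervalIntegrable_const,
      intervalIntegral.integral_const]
    simp [hpdef, mul_comm]
    exact hI1def.symm
  have hc : (∫ r in s..t, (A r - A s)^2) = I2 - 2 * A s * I1 + (A s)^2 * p := by
    have : ∀ r, (A r - A s)^2 = (A r)^2 - (2 * A s) * A r + (A s)^2 := by intro r; ring
    simp_rw [this]
    rw [intervalIntegral.integral_add ((hI2.sub (hI.const_mul _)))
        intervalIntegrable_const,
      intervalIntegral.integral_sub hI2 (hI.const_mul _),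
      intervalIntegral.integral_const_mul, intervalIntegral.integral_const]
    simp [hpdef]; ring
  have hmval : m = p⁻¹ * (I2 - 2 * (p⁻¹ * I1) * I1 + (p⁻¹ * I1)^2 * p) := by
    rw [hmdef]
    congr 1
    have : ∀ r, (A r - p⁻¹ * I1)^2 = (A r)^2 - (2 * (p⁻¹ * I1)) * A r + (p⁻¹ * I1)^2 := by
      intro r; ring
    simp_rw [← hI1def, this]
    rw [intervalIntegral.integral_add ((hI2.sub (hI.const_mul _)))
        intervalIntegrable_const,
      intervalIntegral.integral_sub hI2 (hI.const_mul _),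
      intervalIntegral.integral_const_mul, intervalIntegral.integral_const]
    simp [hpdef]; ring
  set b := ∫ r in s..t, (A r - A s) with hbdef
  set c := ∫ r in s..t, (A r - A s)^2 with hcdef
  have hD : p * c - b^2 = p^2 * m := by
    rw [hb, hc, hmval]
    field_simp
    ring
  have hm' : 0 < m := hm
  have hDpos : 0 < p * c - b^2 := by rw [hD]; positivity
  set M := a • !![p, -b; -b, c] with hMdef
  have hMinv : M⁻¹ = (a * (p * c - b^2))⁻¹ • !![c, b; b, p] := by
    apply Matrix.inv_eq_right_inv
    ext i j
    fin_cases i <;> fin_cases j <;>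
      · simp [hMdef, Matrix.mul_apply, Fin.sum_univ_two, Matrix.smul_apply]
        field_simp
        ring
  have h1 : (M⁻¹.mulVec w) 1 = (a * (p * c - b^2))⁻¹ * (b * w 0 + p * w 1) := by
    rw [hMinv]
    simp [Matrix.mulVec, dotProduct, Fin.sum_univ_two]
    ring
  have h2 : M⁻¹.mulVec w ⬝ᵥ w
      = (a * (p * c - b^2))⁻¹ * (c * (w 0)^2 + 2 * b * w 0 * w 1 + p * (w 1)^2) := by
    rw [hMinv]
    simp [Matrix.mulVec, dotProduct, Fin.sum_univ_two]
    ring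
  set X := b * w 0 + p * w 1 with hXdef
  set Q := c * (w 0)^2 + 2 * b * w 0 * w 1 + p * (w 1)^2 with hQdef
  have hXQ : X^2 ≤ p * Q := by
    rw [hXdef, hQdef]
    nlinarith [mul_nonneg hDpos.le (sq_nonneg (w 0))]
  have hQ0 : 0 ≤ Q := le_of_mul_le_mul_left
    (by linarith [sq_nonneg X, hXQ] : p * 0 ≤ p * Q) hp
  clear hmdef hI1def hI2def hpdef hbdef hcdef hMdef hb hc hmval hXdef hQdef hI hI2 hAc hsub hA hm
  clear_value I1 I2 p m b c M X Q
  rw [h1, h2]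
  have hane : a ≠ 0 := ha.ne'
  have hlhs : a * |(a * (p * c - b^2))⁻¹ * X| = |X| / (p^2 * m) := by
    rw [abs_mul, abs_of_pos (by positivity : (0:ℝ) < (a * (p * c - b^2))⁻¹), hD]
    field_simp
  have hrhs : a * ((a * (p * c - b^2))⁻¹ * Q) = Q / (p^2 * m) := by
    rw [hD]; field_simp
  rw [hlhs, hrhs]
  -- now pure inequality
  have key : |X| ≤ Real.sqrt (p * Q) := by
    rw [← Real.sqrt_sq_eq_abs]
    exact Real.sqrt_le_sqrt hXQ
  calc |X| / (p^2 * m) ≤ Real.sqrt (p * Q) / (p^2 * m) := by gcongr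
    _ = 1 / Real.sqrt (p * m) * Real.sqrt (Q / (p^2 * m)) := by
        rw [one_div, ← Real.sqrt_inv, ← Real.sqrt_mul (by positivity)]
        have heq : (p * m)⁻¹ * (Q / (p^2 * m)) = (p * Q) / (p^2 * m)^2 := by
          field_simp
        rw [heq, Real.sqrt_div (by positivity), Real.sqrt_sq (by positivity)]
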